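/- arXiv:2208.03355 — 9 statements merged into one kernel-verified Lean document; each statement's English description precedes it below -/
import Mathlib

section
/- If a blockchain tree has the property that every block is either accepted or rejected but not both (where a block is accepted if it is an ancestor of all but finitely many blocks, and rejected if it is an ancestor of only finitely many blocks), then the tree has exactly one infinite branch. -/
/-- `c` is a child of `b` in the blockchain tree given by `parent`. -/
def ChildOf {B : Type} (parent : B → Option B) (c b : B) : Prop := parent c = some b

/-- `b` is a (strict) ancestor of `c`. -/
def Anc {B : Type} (parent : B → Option B) (b c : B) : Prop :=
  Relation.TransGen (ChildOf parent) c b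

/-- `b` is an ancestor of `c` or equal to it. -/
def AncOrEq {B : Type} (parent : B → Option B) (b c : B) : Prop :=
  Relation.ReflTransGen (ChildOf parent) c b

/-- An infinite branch: a path from the root following the child relation. -/
def InfBranch {B : Type} (parent : B → Option B) (root : B) (f : ℕ → B) : Prop :=
  f 0 = root ∧ ∀ n, parent (f (n + 1)) = some (f n)

/-- A block is accepted if it is an ancestor of (or equal to) all but finitely many blocks. -/
def Accepted {B : Type} (parent : B → Option B) (b : B) : Prop :=
  {c | ¬ AncOrEq parent b c}.Finite

/-- A block is rejected if it is an ancestor of only finitely many blocks. -/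
def Rejected {B : Type} (parent : B → Option B) (b : B) : Prop :=
  {c | Anc parent b c}.Finite

/-- Globally decisive: every block is accepted or rejected but not both. -/
def GloballyDecisive {B : Type} (parent : B → Option B) : Prop :=
  ∀ b, (Accepted parent b ∨ Rejected parent b) ∧ ¬ (Accepted parent b ∧ Rejected parent b)

section Aux
variable {B : Type} {parent : B → Option B}

lemma childOf_rightUnique : Relator.RightUnique (ChildOf parent) := by
  intro a b c hb hc
  unfold ChildOf at hb hc
  rw [hb] at hc
  exact Option.some.inj hc

lemma no_cycle {root : B} (hroot : parent root = none)
    (hreach : ∀ b, AncOrEq parent root b) (b : B) : ¬ Anc parent b b := by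
  have h : Relation.ReflTransGen (ChildOf parent) b root := hreach b
  induction h using Relation.ReflTransGen.head_induction_on with
  | refl =>
    intro hc
    obtain ⟨x, hx, -⟩ := Relation.TransGen.head'_iff.mp hc
    rw [ChildOf, hroot] at hx
    exact nomatch hx
  | head hac _ ih =>
    rename_i a c _
    intro hcc
    obtain ⟨x, hx, hxa⟩ := Relation.TransGen.head'_iff.mp hcc
    have hxc : x = c := childOf_rightUnique hx hac
    subst hxc
    exact ih (Relation.TransGen.tail' hxa hac)

lemma siblings_eq {b c1 c2 : B} (hnc : ¬ Anc parent b b)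
    (h1 : ChildOf parent c1 b) (h2 : ChildOf parent c2 b)
    (h12 : Relation.ReflTransGen (ChildOf parent) c1 c2) : c1 = c2 := by
  rcases h12.cases_head with heq | ⟨y, hy, hyc2⟩
  · exact heq
  · have : y = b := childOf_rightUnique hy h1
    subst this
    exact absurd (Relation.TransGen.tail' hyc2 h2) hnc

end Aux

/-- A globally decisive blockchain tree has exactly one infinite branch. -/
theorem stmt_1 {B : Type} (root : B) (parent : B → Option B) (N : ℕ)
    (hroot : parent root = none)
    (hreach : ∀ b, AncOrEq parent root b)
    (harity : ∀ b : B, {c | parent c = some b}.Finite ∧ {c | parent c = some b}.ncard ≤ N)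
    (hdec : GloballyDecisive parent) :
    ∃! f : ℕ → B, InfBranch parent root f := by
  have hnc : ∀ b, ¬ Anc parent b b := no_cycle hroot hreach
  have hacc_root : Accepted parent root := by
    have : {c | ¬ AncOrEq parent root c} = ∅ := by
      ext c; simp [hreach c]
    rw [Accepted, this]
    exact Set.finite_empty
  -- every accepted block has a unique accepted child
  have key : ∀ b, Accepted parent b → ∃! c, ChildOf parent c b ∧ Accepted parent c := by
    intro b hb
    have hnr : ¬ Rejected parent b := fun hr => (hdec b).2 ⟨hb, hr⟩
    -- existence
    have hexists : ∃ c, ChildOf parent c b ∧ Accepted parent c := by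
      by_contra hno
      push_neg at hno
      apply hnr
      have hsub : {c | Anc parent b c} ⊆
          ⋃ x ∈ {x | parent x = some b}, ({x} ∪ {c | Anc parent x c}) := by
        intro c hc
        obtain ⟨x, hcx, hxb⟩ := Relation.TransGen.tail'_iff.mp hc
        refine Set.mem_biUnion hxb ?_
        rcases Relation.reflTransGen_iff_eq_or_transGen.mp hcx with heq | ht
        · exact Or.inl heq.symm
        · exact Or.inr ht
      refine Set.Finite.subset ?_ hsub
      refine Set.Finite.biUnion (harity b).1 ?_
      intro x hx
      have hxr : Rejected parent x := by
        rcases (hdec x).1 with hax | hrx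
        · exact absurd hax (hno x hx)
        · exact hrx
      exact (Set.finite_singleton x).union hxr
    -- uniqueness
    obtain ⟨c, hc⟩ := hexists
    refine ⟨c, hc, ?_⟩
    intro c' hc'
    -- both accepted children of b; find a common descendant
    have h1 : Accepted parent c := hc.2
    have hnr' : ¬ Rejected parent c' := fun hr => (hdec c').2 ⟨hc'.2, hr⟩
    have hinf : {d | Anc parent c' d}.Infinite := hnr'
    obtain ⟨d, hd1, hd2⟩ := (hinf.diff h1).nonempty
    have hdc : AncOrEq parent c d := not_not.mp hd2
    have hdc' : AncOrEq parent c' d := hd1.to_reflTransGen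
    rcases Relation.ReflTransGen.total_of_right_unique childOf_rightUnique hdc' hdc with h | h
    · exact siblings_eq (hnc b) hc'.1 hc.1 h
    · exact (siblings_eq (hnc b) hc.1 hc'.1 h).symm
  -- construct the branch
  let g : {b // Accepted parent b} → {b // Accepted parent b} :=
    fun x => ⟨(key x.1 x.2).exists.choose, (key x.1 x.2).exists.choose_spec.2⟩
  have hg : ∀ x : {b // Accepted parent b}, ChildOf parent (g x).1 x.1 :=
    fun x => (key x.1 x.2).exists.choose_spec.1
  let F : ℕ → {b // Accepted parent b} := fun n => g^[n] ⟨root, hacc_root⟩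
  have hF : InfBranch parent root (fun n => (F n).1) := by
    constructor
    · rfl
    · intro n
      show parent (F (n + 1)).1 = some (F n).1
      have h : F (n + 1) = g (F n) := Function.iterate_succ_apply' g n _
      rw [h]
      exact hg (F n)
  refine ⟨fun n => (F n).1, hF, ?_⟩
  -- uniqueness of the branch
  intro f hf
  -- elements of any branch are injective, hence accepted
  have hanc : ∀ n k, Relation.TransGen (ChildOf parent) (f (n + k + 1)) (f n) := by
    intro n k
    induction k with
    | zero => exact Relation.TransGen.single (hf.2 n)
    | succ k ih => exact Relation.TransGen.head (hf.2 (n + k + 1)) ih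
  have hinj : Function.Injective f := by
    intro i j hij
    by_contra hne
    rcases Nat.lt_or_ge i j with h | h
    · obtain ⟨k, rfl⟩ := Nat.exists_eq_add_of_lt h
      exact hnc (f i) (hij ▸ hanc i k)
    · have h' : j < i := lt_of_le_of_ne h (Ne.symm hne)
      obtain ⟨k, rfl⟩ := Nat.exists_eq_add_of_lt h'
      exact hnc (f j) (hij ▸ hanc j k)
  have hfacc : ∀ n, Accepted parent (f n) := by
    intro n
    rcases (hdec (f n)).1 with h | h
    · exact h
    · exfalso
      have : {c | Anc parent (f n) c}.Infinite :=
        Set.infinite_of_injective_forall_mem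
          (f := fun k : ℕ => f (n + k + 1))
          (fun a b hab => by have := hinj hab; omega)
          (fun k => hanc n k)
      exact this h
  funext n
  induction n with
  | zero => rw [hf.1]; rfl
  | succ n ih =>
    have h1 : ChildOf parent (f (n + 1)) ((F n).1) ∧ Accepted parent (f (n + 1)) := by
      constructor
      · have := hf.2 n
        rw [ih] at this
        exact this
      · exact hfacc (n + 1)
    have h2 : ChildOf parent ((F (n+1)).1) ((F n).1) ∧ Accepted parent ((F (n+1)).1) :=
      ⟨hF.2 n, (F (n+1)).2⟩
    have hu := key (F n).1 (F n).2
    obtain ⟨c, -, huniq⟩ := hu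
    rw [huniq _ h1, huniq _ h2]
end

section
/- If a blockchain tree has two or more distinct infinite branches, then any block lying on one infinite branch but not on the shared trunk of two infinite branches is neither accepted nor rejected. -/
section Aux

variable {B : Type} {parent : B → Option B} {root : B} {g : ℕ → B}

lemma branch_iter (hg : InfBranch parent root g) :
    ∀ m n, (fun o : Option B => o.bind parent)^[m] (some (g (n + m))) = some (g n) := by
  intro m
  induction m with
  | zero => intro n; simp
  | succ m ih =>
    intro n
    have h1 : (fun o : Option B => o.bind parent) (some (g (n + (m + 1)))) = some (g (n + m)) := by
      have : n + (m + 1) = (n + m) + 1 := by ring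
      simp [this, hg.2 (n + m)]
    rw [Function.iterate_succ_apply]
    simp only [Option.bind_some] at h1 ⊢
    rw [h1, ih]

lemma branch_inj_aux (hg : InfBranch parent root g) (hroot : parent root = none)
    {i j : ℕ} (hij : i < j) : g i ≠ g j := by
  intro heq
  have h1 := branch_iter hg i 0
  have h2 := branch_iter hg i (j - i)
  rw [Nat.zero_add] at h1
  rw [Nat.sub_add_cancel hij.le] at h2
  rw [heq] at h1
  rw [h1] at h2
  have hroot_eq : g 0 = g (j - i) := Option.some.inj h2
  have hpos : j - i = (j - i - 1) + 1 := by omega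
  have := hg.2 (j - i - 1)
  rw [← hpos, ← hroot_eq, hg.1, hroot] at this
  exact (Option.some_ne_none _ this.symm).elim

lemma branch_inj (hg : InfBranch parent root g) (hroot : parent root = none) :
    Function.Injective g := by
  intro i j hij
  rcases lt_trichotomy i j with h | h | h
  · exact absurd hij (branch_inj_aux hg hroot h)
  · exact h
  · exact absurd hij.symm (branch_inj_aux hg hroot h)

/-- Any ancestor-or-equal of `g n` is some `g m` with `m ≤ n`. -/
lemma branch_anc (hg : InfBranch parent root g) (hroot : parent root = none) :
    ∀ n c, Relation.ReflTransGen (ChildOf parent) (g n) c → ∃ m ≤ n, c = g m := by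
  intro n
  induction n with
  | zero =>
    intro c h
    rcases h.cases_head with rfl | ⟨y, hy, _⟩
    · exact ⟨0, le_refl 0, rfl⟩
    · rw [ChildOf, hg.1, hroot] at hy
      exact (Option.some_ne_none _ hy.symm).elim
  | succ n ih =>
    intro c h
    rcases h.cases_head with rfl | ⟨y, hy, hrest⟩
    · exact ⟨n + 1, le_refl _, rfl⟩
    · rw [ChildOf, hg.2 n] at hy
      obtain ⟨m, hm, rfl⟩ := ih c (Option.some.inj hy ▸ hrest)
      exact ⟨m, hm.trans n.le_succ, rfl⟩

/-- `g k` is a strict ancestor of `g n` for `k < n`. -/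
lemma branch_desc (hg : InfBranch parent root g) {k n : ℕ} (hkn : k < n) :
    Relation.TransGen (ChildOf parent) (g n) (g k) := by
  induction n, hkn using Nat.le_induction with
  | base => exact Relation.TransGen.single (hg.2 k)
  | succ n hn ih => exact Relation.TransGen.head (hg.2 n) ih

end Aux

/-- If there are two distinct infinite branches, then any block lying on one
of them but not on their shared trunk (i.e. not on the other branch) is neither accepted
nor rejected. -/
theorem stmt_3 {B : Type} (root : B) (parent : B → Option B)
    (hroot : parent root = none)
    (hreach : ∀ b, AncOrEq parent root b)
    (f g : ℕ → B) (hf : InfBranch parent root f) (hg : InfBranch parent root g)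
    (hne : f ≠ g)
    (b : B) (k : ℕ) (hb : f k = b) (hnotTrunk : b ∉ Set.range g) :
    ¬ Accepted parent b ∧ ¬ Rejected parent b := by
  subst hb
  constructor
  · intro hAcc
    have hsub : Set.range g ⊆ {c | ¬ AncOrEq parent (f k) c} := by
      rintro _ ⟨n, rfl⟩ hA
      obtain ⟨m, _, hm⟩ := branch_anc hg hroot n (f k) hA
      exact hnotTrunk ⟨m, hm.symm⟩
    exact (Set.infinite_range_of_injective (branch_inj hg hroot)) (hAcc.subset hsub)
  · intro hRej
    have hsub : f '' Set.Ioi k ⊆ {c | Anc parent (f k) c} := by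
      rintro _ ⟨n, hn, rfl⟩
      exact branch_desc hf hn
    have hinf : (f '' Set.Ioi k).Infinite :=
      (Set.Ioi_infinite k).image ((branch_inj hf hroot).injOn)
    exact hinf (hRej.subset hsub)
end

section
/- A blockchain tree is globally decisive (every block is accepted or rejected, and not both) if and only if it is infinite and has exactly one infinite branch. -/
namespace S4
variable {B : Type} (parent : B → Option B)

def iterP : ℕ → B → Option B
  | 0, b => some b
  | n+1, b => (iterP n b).bind parent

variable {parent}

lemma iterP_add (m n : ℕ) (b : B) :
    iterP parent (m + n) b = (iterP parent n b).bind (iterP parent m) := by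
  induction m with
  | zero =>
    rw [Nat.zero_add]
    cases h : iterP parent n b <;> simp [iterP, h]
  | succ m ih =>
    rw [show m + 1 + n = (m + n) + 1 from by omega, iterP, ih]
    cases h : iterP parent n b <;> simp [iterP, h]

lemma iterP_one (b : B) : iterP parent 1 b = parent b := by simp [iterP]

lemma iterP_succ' (n : ℕ) (b : B) :
    iterP parent (n+1) b = (parent b).bind (iterP parent n) := by
  have h := iterP_add (parent := parent) n 1 b
  rw [h, iterP_one]

lemma ancOrEq_iff {a c : B} :
    AncOrEq parent a c ↔ ∃ n, iterP parent n c = some a := by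
  constructor
  · intro h
    induction h using Relation.ReflTransGen.head_induction_on with
    | refl => exact ⟨0, rfl⟩
    | head hstep _ ih =>
      obtain ⟨n, hn⟩ := ih
      exact ⟨n + 1, by rw [iterP_succ', hstep]; exact hn⟩
  · rintro ⟨n, hn⟩
    induction n generalizing c with
    | zero => cases hn; exact Relation.ReflTransGen.refl
    | succ n ih =>
      rw [iterP_succ'] at hn
      cases hp : parent c with
      | none => rw [hp] at hn; simp at hn
      | some d =>
        rw [hp] at hn
        exact Relation.ReflTransGen.head hp (ih hn)

/-- Decompose a strict descendant through a child of `a`. -/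
lemma anc_iff_child {a c : B} :
    Anc parent a c ↔ ∃ d, AncOrEq parent d c ∧ parent d = some a :=
  Relation.TransGen.tail'_iff

section Root
variable {root : B} (hroot : parent root = none) (hreach : ∀ b, AncOrEq parent root b)
include hreach

lemma exists_depth (b : B) : ∃ n, iterP parent n b = some root :=
  ancOrEq_iff.mp (hreach b)

open Classical in
noncomputable def depth (b : B) : ℕ := Nat.find (exists_depth hreach b)

open Classical in
lemma depth_spec (b : B) : iterP parent (depth hreach b) b = some root :=
  Nat.find_spec (exists_depth hreach b)

omit hreach in include hroot in
lemma depth_unique {b : B} {n m : ℕ} (h1 : iterP parent n b = some root)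
    (h2 : iterP parent m b = some root) : n = m := by
  have key : ∀ {n m : ℕ}, n ≤ m → iterP parent n b = some root →
      iterP parent m b = some root → n = m := by
    intro n m hle h1 h2
    have h3 := iterP_add (parent := parent) (m - n) n b
    rw [Nat.sub_add_cancel hle, h1, h2] at h3
    simp only [Option.bind_some] at h3
    cases hk : m - n with
    | zero => omega
    | succ k =>
      rw [hk, iterP_succ', hroot] at h3
      simp at h3
  rcases Nat.le_total n m with h | h
  · exact key h h1 h2
  · exact (key h h2 h1).symm

include hroot in
lemma depth_eq {b : B} {n : ℕ} (h : iterP parent n b = some root) :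
    depth hreach b = n :=
  depth_unique hroot (depth_spec hreach b) h

include hroot in
lemma depth_add {a c : B} {n : ℕ} (h : iterP parent n c = some a) :
    depth hreach c = depth hreach a + n := by
  apply depth_eq hroot
  rw [iterP_add, h]
  exact depth_spec hreach a

include hroot in
lemma ancOrEq_eq_of_depth {a b c : B} (ha : AncOrEq parent a c) (hb : AncOrEq parent b c)
    (hd : depth hreach a = depth hreach b) : a = b := by
  obtain ⟨n, hn⟩ := ancOrEq_iff.mp ha
  obtain ⟨m, hm⟩ := ancOrEq_iff.mp hb
  have e1 := depth_add hroot hreach hn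
  have e2 := depth_add hroot hreach hm
  have : n = m := by omega
  subst this
  rw [hn] at hm
  exact Option.some.inj hm

include hroot in
lemma branch_depth {f : ℕ → B} (hf : InfBranch parent root f) (n : ℕ) :
    depth hreach (f n) = n := by
  induction n with
  | zero => rw [hf.1]; exact depth_eq hroot hreach rfl
  | succ n ih =>
    have h1 : iterP parent 1 (f (n+1)) = some (f n) := by
      rw [iterP_one]; exact hf.2 n
    rw [depth_add hroot hreach h1, ih]

include hroot in
lemma branch_inj {f : ℕ → B} (hf : InfBranch parent root f) :
    Function.Injective f := fun n m h => by
  have := branch_depth hroot hreach hf n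
  rw [h, branch_depth hroot hreach hf m] at this
  omega

omit hreach in
lemma branch_mono {f : ℕ → B} (hf : InfBranch parent root f) {n m : ℕ} (h : n ≤ m) :
    AncOrEq parent (f n) (f m) := by
  induction m with
  | zero => cases Nat.le_zero.mp h; exact Relation.ReflTransGen.refl
  | succ m ih =>
    rcases Nat.lt_or_ge n (m+1) with h' | h'
    · exact Relation.ReflTransGen.head (hf.2 m) (ih (by omega))
    · have : n = m + 1 := by omega
      subst this; exact Relation.ReflTransGen.refl

omit hreach in
lemma branch_anc {f : ℕ → B} (hf : InfBranch parent root f) {n m : ℕ} (h : n < m) :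
    Anc parent (f n) (f m) :=
  Relation.TransGen.tail' (branch_mono hf (by omega : n + 1 ≤ m)) (hf.2 n)

omit hreach in
lemma descOrEq_decomp (b : B) :
    {c | AncOrEq parent b c} ⊆
      {b} ∪ ⋃ d ∈ {d | parent d = some b}, {c | AncOrEq parent d c} := by
  intro c hc
  rcases Relation.ReflTransGen.cases_tail hc with h | ⟨d, hd1, hd2⟩
  · exact Or.inl h.symm
  · right
    simp only [Set.mem_iUnion, Set.mem_setOf_eq]
    exact ⟨d, hd2, hd1⟩

omit hreach in
lemma koenig_step (hfin : ∀ b : B, {c | parent c = some b}.Finite) (x : B)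
    (hx : {c | AncOrEq parent x c}.Infinite) :
    ∃ y, parent y = some x ∧ {c | AncOrEq parent y c}.Infinite := by
  by_contra h
  push_neg at h
  apply hx
  apply Set.Finite.subset _ (descOrEq_decomp x)
  exact (Set.finite_singleton x).union
    ((hfin x).biUnion fun d hd => (h d hd))

lemma koenig (hfin : ∀ b : B, {c | parent c = some b}.Finite) (b : B)
    (hb : {c | AncOrEq parent b c}.Infinite) :
    ∃ f, InfBranch parent root f ∧ f (depth hreach b) = b := by
  classical
  have step : ∀ x : {x : B // {c | AncOrEq parent x c}.Infinite},
      ∃ y : {x : B // {c | AncOrEq parent x c}.Infinite}, parent y.1 = some x.1 := by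
    intro x
    obtain ⟨y, hy1, hy2⟩ := koenig_step hfin x.1 x.2
    exact ⟨⟨y, hy2⟩, hy1⟩
  choose st hst using step
  set ch : ℕ → {x : B // {c | AncOrEq parent x c}.Infinite} :=
    fun n => st^[n] ⟨b, hb⟩ with hch_def
  have hch0 : (ch 0).1 = b := rfl
  have hch : ∀ n, parent (ch (n+1)).1 = some (ch n).1 := by
    intro n
    have h1 : ch (n+1) = st (ch n) := Function.iterate_succ_apply' st n _
    rw [h1]; exact hst (ch n)
  set m := depth hreach b with hm
  have hmspec : iterP parent m b = some root := depth_spec hreach b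
  have hsome : ∀ k ≤ m, ∃ a, iterP parent k b = some a := by
    intro k hk
    cases h : iterP parent k b with
    | some a => exact ⟨a, rfl⟩
    | none =>
      exfalso
      have h3 := iterP_add (parent := parent) (m - k) k b
      rw [Nat.sub_add_cancel hk, h, hmspec] at h3
      simp at h3
  set u : ℕ → B := fun k => (iterP parent k b).getD b with hu
  have husome : ∀ k ≤ m, iterP parent k b = some (u k) := by
    intro k hk
    obtain ⟨a, ha⟩ := hsome k hk
    rw [hu]; simp only [ha]; rfl
  have hu0 : u 0 = b := rfl
  refine ⟨fun n => if n ≤ m then u (m - n) else (ch (n - m)).1, ⟨?_, ?_⟩, ?_⟩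
  · simp only [Nat.zero_le, if_pos, Nat.sub_zero]
    have h1 := husome m le_rfl
    rw [hmspec] at h1
    exact (Option.some.inj h1).symm
  · intro n
    beta_reduce
    rcases Nat.lt_trichotomy n m with hn | hn | hn
    · rw [if_pos (by omega : n+1 ≤ m), if_pos (by omega : n ≤ m)]
      have h1 := husome (m - (n+1)) (by omega)
      have h2 := husome (m - n) (by omega)
      have h3 : iterP parent (m - n) b = (iterP parent (m - (n+1)) b).bind parent := by
        rw [show m - n = (m - (n+1)) + 1 from by omega]; rfl
      rw [h1, h2] at h3
      simpa using h3.symm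
    · rw [if_neg (by omega), if_pos (by omega : n ≤ m),
        show m - n = 0 from by omega, hu0, show n + 1 - m = 1 from by omega]
      rw [hch 0, hch0]
    · rw [if_neg (by omega), if_neg (by omega),
        show n + 1 - m = (n - m) + 1 from by omega]
      exact hch (n - m)
  · beta_reduce
    rw [if_pos le_rfl, Nat.sub_self, hu0]

end Root
end S4

/-- A blockchain tree is globally decisive iff it is infinite and has exactly
one infinite branch. -/
theorem stmt_4 {B : Type} (root : B) (parent : B → Option B) (N : ℕ)
    (hroot : parent root = none)
    (hreach : ∀ b, AncOrEq parent root b)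
    (harity : ∀ b : B, {c | parent c = some b}.Finite ∧ {c | parent c = some b}.ncard ≤ N) :
    GloballyDecisive parent ↔ (Infinite B ∧ ∃! f : ℕ → B, InfBranch parent root f) := by
  classical
  have hfin : ∀ b : B, {c | parent c = some b}.Finite := fun b => (harity b).1
  constructor
  · intro hGD
    have hInf : Infinite B := by
      by_contra hfinB
      rw [not_infinite_iff_finite] at hfinB
      exact (hGD root).2 ⟨Set.toFinite _, Set.toFinite _⟩
    have hrootinf : {c | AncOrEq parent root c}.Infinite := by
      have he : {c | AncOrEq parent root c} = Set.univ := Set.eq_univ_of_forall hreach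
      rw [he]; exact Set.infinite_univ
    obtain ⟨f, hf, -⟩ := S4.koenig hreach hfin root hrootinf
    refine ⟨hInf, f, hf, ?_⟩
    intro g hg
    by_contra hne
    have hex : ∃ n, g n ≠ f n := by
      by_contra h; push_neg at h; exact hne (funext h)
    have hn : g (Nat.find hex) ≠ f (Nat.find hex) := Nat.find_spec hex
    have hmin : ∀ m < Nat.find hex, g m = f m := fun m hm => not_not.mp (Nat.find_min hex hm)
    have npos : Nat.find hex ≠ 0 := by
      intro h0; apply hn; rw [h0, hg.1, hf.1]
    obtain ⟨k, hk⟩ : ∃ k, Nat.find hex = k + 1 := ⟨Nat.find hex - 1, by omega⟩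
    rw [hk] at hn hmin
    -- g (k+1) is not rejected
    have hnrej : ¬ Rejected parent (g (k+1)) := by
      intro hr
      have : {c | Anc parent (g (k+1)) c}.Infinite := by
        apply Set.infinite_of_injective_forall_mem (f := fun j : ℕ => g (k + 2 + j))
        · intro a b h
          have := S4.branch_inj hroot hreach hg h
          omega
        · intro j
          exact S4.branch_anc hg (by omega : k + 1 < k + 2 + j)
      exact this hr
    have hacc : Accepted parent (g (k+1)) := ((hGD (g (k+1))).1).resolve_right hnrej
    have : {c | ¬ AncOrEq parent (g (k+1)) c}.Infinite := by
      apply Set.infinite_of_injective_forall_mem (f := fun j : ℕ => f (k + 1 + j))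
      · intro a b h
        have := S4.branch_inj hroot hreach hf h
        omega
      · intro j hmem
        apply hn
        refine S4.ancOrEq_eq_of_depth hroot hreach hmem
          (S4.branch_mono hf (by omega : k + 1 ≤ k + 1 + j)) ?_
        rw [S4.branch_depth hroot hreach hg, S4.branch_depth hroot hreach hf]
    exact this hacc
  · rintro ⟨hInf, f, hf, huniq⟩
    have honb : ∀ b : B, {c | AncOrEq parent b c}.Infinite → b = f (S4.depth hreach b) := by
      intro b hb
      obtain ⟨g, hg, hgb⟩ := S4.koenig hreach hfin b hb
      rw [huniq g hg] at hgb
      exact hgb.symm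
    intro b
    by_cases hb : {c | AncOrEq parent b c}.Finite
    · have hrej : Rejected parent b :=
        hb.subset fun c hc => (hc : Anc parent b c).to_reflTransGen
      have hnacc : ¬ Accepted parent b := by
        intro hacc
        have hun : (Set.univ : Set B).Finite := by
          apply (hb.union hacc).subset
          intro c _
          by_cases h : AncOrEq parent b c
          exacts [Or.inl h, Or.inr h]
        exact Set.infinite_univ hun
      exact ⟨Or.inr hrej, fun h => hnacc h.1⟩
    · have hbf := honb b hb
      set n := S4.depth hreach b with hnd
      have hnrej : ¬ Rejected parent b := by
        intro hr
        have : {c | Anc parent b c}.Infinite := by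
          apply Set.infinite_of_injective_forall_mem (f := fun j : ℕ => f (n + 1 + j))
          · intro a b h
            have := S4.branch_inj hroot hreach hf h
            omega
          · intro j
            rw [hbf]
            exact S4.branch_anc hf (by omega : n < n + 1 + j)
        exact this hr
      have hacc : Accepted parent b := by
        have hS : (⋃ k ∈ Set.Iio n, ({f k} ∪
            ⋃ d ∈ ({d | parent d = some (f k)} \ {f (k+1)}), {c | AncOrEq parent d c})).Finite := by
          apply Set.Finite.biUnion (Set.finite_Iio n)
          intro k hk
          apply (Set.finite_singleton _).union
          apply Set.Finite.biUnion ((hfin (f k)).subset Set.diff_subset)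
          intro d hd
          by_contra hdinf
          have hdinf' : {c | AncOrEq parent d c}.Infinite := hdinf
          have hdf := honb d hdinf'
          have hdep : S4.depth hreach d = k + 1 := by
            have h1 : S4.iterP parent 1 d = some (f k) := by
              rw [S4.iterP_one]; exact hd.1
            rw [S4.depth_add hroot hreach h1, S4.branch_depth hroot hreach hf]
          rw [hdep] at hdf
          exact hd.2 hdf
        apply hS.subset
        intro c hc
        have hK0 : AncOrEq parent (f 0) c := by rw [hf.1]; exact hreach c
        set K := Nat.findGreatest (fun k => AncOrEq parent (f k) c) n with hKd
        have hPK : AncOrEq parent (f K) c := by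
          have := Nat.findGreatest_spec (P := fun k => AncOrEq parent (f k) c)
            (Nat.zero_le n) hK0
          exact this
        have hKle : K ≤ n := Nat.findGreatest_le n
        have hKne : K ≠ n := by
          intro h
          apply hc
          rw [hbf, ← h]
          exact hPK
        have hnot : ¬ AncOrEq parent (f (K+1)) c := by
          have := Nat.findGreatest_is_greatest (P := fun k => AncOrEq parent (f k) c)
            (by omega) (by omega : K + 1 ≤ n)
          exact this
        simp only [Set.mem_iUnion, Set.mem_union, Set.mem_singleton_iff,
          Set.mem_setOf_eq, Set.mem_Iio, Set.mem_diff]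
        refine ⟨K, by omega, ?_⟩
        rcases Relation.ReflTransGen.cases_tail hPK with h | ⟨d, hd1, hd2⟩
        · exact Or.inl h.symm
        · right
          refine ⟨d, ⟨hd2, ?_⟩, hd1⟩
          intro hdf
          exact hnot (hdf ▸ hd1)
      exact ⟨Or.inl hacc, fun h => hnrej h.2⟩
end

section
/- In a globally decisive blockchain tree, a block is accepted if and only if every cousin branch of the block is finite. -/
/-- Descendants (or equal) of a block. -/
def Desc {B : Type} (parent : B → Option B) (x : B) : Set B := {c | AncOrEq parent x c}

lemma desc_subset {B : Type} (parent : B → Option B) (x : B) :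
    Desc parent x ⊆ insert x (⋃ y ∈ {c | parent c = some x}, Desc parent y) := by
  intro c hc
  rcases Relation.ReflTransGen.cases_tail hc with h | ⟨y, hcy, hyx⟩
  · exact Set.mem_insert_iff.mpr (Or.inl h.symm)
  · exact Set.mem_insert_iff.mpr (Or.inr (Set.mem_biUnion hyx hcy))

lemma konig_step {B : Type} (parent : B → Option B)
    (harity : ∀ b : B, {c | parent c = some b}.Finite) (x : B)
    (hx : (Desc parent x).Infinite) :
    ∃ y, parent y = some x ∧ (Desc parent y).Infinite := by
  by_contra h
  push_neg at h
  have hfin : (Desc parent x).Finite := by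
    apply Set.Finite.subset _ (desc_subset parent x)
    apply Set.Finite.insert
    exact Set.Finite.biUnion (harity x) (fun y hy => h y hy)
  exact hx hfin

lemma exists_infBranch {B : Type} (root : B) (parent : B → Option B)
    (harity : ∀ b : B, {c | parent c = some b}.Finite)
    (hroot_inf : (Desc parent root).Infinite) :
    ∃ f : ℕ → B, InfBranch parent root f ∧ ∀ n, (Desc parent (f n)).Infinite := by
  let g : ℕ → {x : B // (Desc parent x).Infinite} := fun n =>
    Nat.rec ⟨root, hroot_inf⟩
      (fun _ p => ⟨(konig_step parent harity p.1 p.2).choose,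
        (konig_step parent harity p.1 p.2).choose_spec.2⟩) n
  refine ⟨fun n => (g n).1, ⟨rfl, fun n => ?_⟩, fun n => (g n).2⟩
  exact (konig_step parent harity (g n).1 (g n).2).choose_spec.1

lemma branch_inj_s6 {B : Type} {parent : B → Option B} {root : B} {f : ℕ → B}
    (hroot : parent root = none) (hf : InfBranch parent root f) :
    Function.Injective f := by
  intro n
  induction n with
  | zero =>
    intro m h
    cases m with
    | zero => rfl
    | succ k =>
      exfalso
      have := hf.2 k
      rw [← h, hf.1, hroot] at this
      cases this
  | succ k ih =>
    intro m h
    cases m with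
    | zero =>
      exfalso
      have := hf.2 k
      rw [h, hf.1, hroot] at this
      cases this
    | succ j =>
      have h2 : some (f k) = some (f j) := by rw [← hf.2 k, ← hf.2 j, h]
      exact congrArg Nat.succ (ih (Option.some.inj h2))

lemma mem_range_of_anc {B : Type} {parent : B → Option B} {root : B} {f : ℕ → B}
    (hroot : parent root = none) (hf : InfBranch parent root f) {b : B} :
    ∀ n, AncOrEq parent b (f n) → b ∈ Set.range f := by
  intro n
  induction n with
  | zero =>
    intro h
    rcases Relation.ReflTransGen.cases_head h with h | ⟨d, hd, _⟩
    · exact ⟨0, h⟩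
    · exfalso
      have : parent (f 0) = some d := hd
      rw [hf.1, hroot] at this
      cases this
  | succ k ih =>
    intro h
    rcases Relation.ReflTransGen.cases_head h with h | ⟨d, hd, hdb⟩
    · exact ⟨k + 1, h⟩
    · have : d = f k := Option.some.inj (by rw [← hd, hf.2 k])
      exact ih (this ▸ hdb)

/-- In a globally decisive blockchain tree, a block is accepted iff every
cousin branch of the block is finite, i.e. iff every infinite branch contains the block. -/
theorem stmt_6 {B : Type} (root : B) (parent : B → Option B) (N : ℕ)
    (hroot : parent root = none)
    (hreach : ∀ b, AncOrEq parent root b)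
    (harity : ∀ b : B, {c | parent c = some b}.Finite ∧ {c | parent c = some b}.ncard ≤ N)
    (hdec : GloballyDecisive parent) :
    ∀ b : B, Accepted parent b ↔ ∀ f : ℕ → B, InfBranch parent root f → b ∈ Set.range f := by
  intro b
  constructor
  · intro hacc f hf
    by_contra hnb
    have hsub : Set.range f ⊆ {c | ¬ AncOrEq parent b c} := by
      rintro _ ⟨n, rfl⟩ hanc
      exact hnb (mem_range_of_anc hroot hf n hanc)
    have : (Set.range f).Finite := hacc.subset hsub
    exact (Set.infinite_range_of_injective (branch_inj_s6 hroot hf)) this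
  · intro hbr
    by_contra hnacc
    have hrej : Rejected parent b := (hdec b).1.resolve_left hnacc
    -- the whole space is infinite since the non-descendant set of b is infinite
    have huniv : (Desc parent root).Infinite := by
      have h1 : {c | ¬ AncOrEq parent b c}.Infinite :=
        not_not.mp (fun h => hnacc (Set.not_infinite.mp h))
      have : Desc parent root = Set.univ := by
        ext c; simpa [Desc] using hreach c
      rw [this]
      exact (h1.mono (Set.subset_univ _))
    obtain ⟨f, hf, hinf⟩ := exists_infBranch root parent (fun x => (harity x).1) huniv
    obtain ⟨m, hm⟩ := hbr f hf
    have hbinf : (Desc parent b).Infinite := hm ▸ hinf m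
    have hbfin : (Desc parent b).Finite := by
      apply Set.Finite.subset (hrej.insert b)
      intro c hc
      rcases Relation.reflTransGen_iff_eq_or_transGen.mp hc with h | h
      · exact Set.mem_insert_iff.mpr (Or.inl h.symm)
      · exact Set.mem_insert_iff.mpr (Or.inr h)
    exact hbinf hbfin
end

section
/- The pool graph of any computation is a directed acyclic graph: if the relation 'pool P1 has infinitely many links to pool P2' had a directed cycle, the pools on the cycle would merge into one pool, contradicting maximality. -/
/-- A journey from `m` to `m'` starting after round `r`: a nonempty temporal path of links
occurring in strictly increasing rounds, all after `r`. -/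
def Journey {M : Type} (link : ℕ → M → M → Prop) (r : ℕ) (m m' : M) : Prop :=
  ∃ (k : ℕ) (f : ℕ → M) (t : ℕ → ℕ),
    0 < k ∧ f 0 = m ∧ f k = m' ∧
    (∀ i, i < k → link (t i) (f i) (f (i + 1))) ∧
    (∀ i, i < k → r < t i) ∧
    (∀ i j, i < j → j < k → t i < t j)

/-- `m` has infinitely many journeys to `m'`: journeys starting arbitrarily late. -/
def InfJ {M : Type} (link : ℕ → M → M → Prop) (m m' : M) : Prop :=
  ∀ r : ℕ, Journey link r m m'

/-- The pool relation: equal, or infinitely many journeys in both directions. -/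
def PoolRel {M : Type} (link : ℕ → M → M → Prop) (m m' : M) : Prop :=
  m = m' ∨ (InfJ link m m' ∧ InfJ link m' m)

/-- A mining pool: an equivalence class of the pool relation. -/
def IsPool {M : Type} (link : ℕ → M → M → Prop) (P : Set M) : Prop :=
  ∃ m : M, P = {m' | PoolRel link m m'}

/-- Pool-graph edge: infinitely many rounds contain a link from `P1` to `P2`. -/
def PoolEdge {M : Type} (link : ℕ → M → M → Prop) (P1 P2 : Set M) : Prop :=
  ∀ r : ℕ, ∃ ρ, r < ρ ∧ ∃ m1 ∈ P1, ∃ m2 ∈ P2, link ρ m1 m2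

/-- Edge of the pool graph (between pools). -/
def PGEdge {M : Type} (link : ℕ → M → M → Prop) (P1 P2 : Set M) : Prop :=
  IsPool link P1 ∧ IsPool link P2 ∧ PoolEdge link P1 P2

/-- A source pool: a pool with only finitely many journeys from outside miners into it,
i.e. no outside miner has infinitely many journeys to a pool member. -/
def SourcePool {M : Type} (link : ℕ → M → M → Prop) (P : Set M) : Prop :=
  IsPool link P ∧ ∀ m, m ∉ P → ∀ m' ∈ P, ¬ InfJ link m m'

lemma infJ_trans {M : Type} {link : ℕ → M → M → Prop} {a b c : M}
    (h1 : InfJ link a b) (h2 : InfJ link b c) : InfJ link a c := by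
  intro r
  obtain ⟨k, f, t, hk, hf0, hfk, hl, hr, hm⟩ := h1 r
  obtain ⟨k2, g, s, hk2, hg0, hgk, hl2, hr2, hm2⟩ := h2 (t (k - 1))
  have htle : ∀ i, i < k → t i ≤ t (k - 1) := by
    intro i hi
    rcases Nat.lt_or_ge i (k - 1) with h | h
    · exact le_of_lt (hm i (k - 1) h (by omega))
    · have : i = k - 1 := by omega
      simp [this]
  refine ⟨k + k2, fun i => if i < k then f i else g (i - k),
    fun i => if i < k then t i else s (i - k), by omega, ?_, ?_, ?_, ?_, ?_⟩
  · simp [hk, hf0]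
  · have : ¬ (k + k2 < k) := by omega
    simp [this, hgk]
  · intro i hi
    rcases Nat.lt_or_ge i k with h | h
    · rcases Nat.lt_or_ge (i + 1) k with h' | h'
      · simpa [h, h'] using hl i h
      · have hik : i + 1 = k := by omega
        have hni : ¬ (i + 1 < k) := by omega
        simp only [h, if_true, hni, if_false]
        rw [show i + 1 - k = 0 by omega, hg0, ← hfk, ← hik]
        exact hl i h
    · have h' : ¬ (i < k) := by omega
      have h'' : ¬ (i + 1 < k) := by omega
      simp only [h', h'', if_false]
      rw [show i + 1 - k = i - k + 1 by omega]
      exact hl2 (i - k) (by omega)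
  · intro i hi
    rcases Nat.lt_or_ge i k with h | h
    · simpa [h] using hr i h
    · have h' : ¬ (i < k) := by omega
      have hrT : r < t (k - 1) := hr (k - 1) (by omega)
      have := hr2 (i - k) (by omega)
      simp only [h', if_false]
      omega
  · intro i j hij hj
    rcases Nat.lt_or_ge j k with h | h
    · have hi' : i < k := by omega
      simpa [h, hi'] using hm i j hij h
    · have h' : ¬ (j < k) := by omega
      have hsj := hr2 (j - k) (by omega)
      rcases Nat.lt_or_ge i k with hi' | hi'
      · have := htle i hi'
        simp only [hi', if_true, h', if_false]
        omega
      · have hi'' : ¬ (i < k) := by omega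
        simpa [hi'', h'] using hm2 (i - k) (j - k) (by omega) (by omega)

lemma link_infJ {M : Type} {link : ℕ → M → M → Prop} {a b : M}
    (h : ∀ r, ∃ ρ, r < ρ ∧ link ρ a b) : InfJ link a b := by
  intro r
  obtain ⟨ρ, hρ, hlink⟩ := h r
  refine ⟨1, fun i => if i = 0 then a else b, fun _ => ρ, one_pos, by simp, by simp, ?_, ?_, ?_⟩
  · intro i hi
    have : i = 0 := by omega
    simpa [this] using hlink
  · intro i hi; exact hρ
  · intro i j hij hj; omega

/-- Pigeonhole: a pool edge gives a fixed pair with infinitely many links. -/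
lemma poolEdge_pair {M : Type} [Fintype M] {link : ℕ → M → M → Prop} {P Q : Set M}
    (h : PoolEdge link P Q) :
    ∃ a ∈ P, ∃ b ∈ Q, ∀ r, ∃ ρ, r < ρ ∧ link ρ a b := by
  by_contra hc
  push_neg at hc
  classical
  have hc' : ∀ p : M × M, ∃ r, p.1 ∈ P → p.2 ∈ Q → ∀ ρ, r < ρ → ¬ link ρ p.1 p.2 := by
    intro p
    by_cases hp : p.1 ∈ P ∧ p.2 ∈ Q
    · obtain ⟨r, hr⟩ := hc p.1 hp.1 p.2 hp.2
      exact ⟨r, fun _ _ ρ hρ => hr ρ hρ⟩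
    · exact ⟨0, fun h1 h2 => absurd ⟨h1, h2⟩ hp⟩
  choose F hF using hc'
  set R := Finset.univ.sup F with hR
  obtain ⟨ρ, hρ, m1, hm1, m2, hm2, hlink⟩ := h R
  have hle : F (m1, m2) ≤ R := Finset.le_sup (Finset.mem_univ _)
  exact hF (m1, m2) hm1 hm2 ρ (by omega) hlink

/-- Two members of a pool are equal or connected by infinitely many journeys. -/
lemma pool_mem_infJ {M : Type} {link : ℕ → M → M → Prop} {P : Set M}
    (hP : IsPool link P) {a b : M} (ha : a ∈ P) (hb : b ∈ P) :
    a = b ∨ InfJ link a b := by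
  obtain ⟨m, rfl⟩ := hP
  have ha' : PoolRel link m a := ha
  have hb' : PoolRel link m b := hb
  rcases ha' with rfl | ⟨hma, ham⟩
  · rcases hb' with rfl | ⟨h1, _⟩
    · exact Or.inl rfl
    · exact Or.inr h1
  · rcases hb' with rfl | ⟨hmb, hbm⟩
    · exact Or.inr ham
    · exact Or.inr (infJ_trans ham hmb)

lemma pool_nonempty {M : Type} {link : ℕ → M → M → Prop} {P : Set M}
    (hP : IsPool link P) : ∃ a, a ∈ P := by
  obtain ⟨m, rfl⟩ := hP
  exact ⟨m, Or.inl rfl⟩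

lemma pgEdge_infJ {M : Type} [Fintype M] {link : ℕ → M → M → Prop} {P Q : Set M}
    (h : PGEdge link P Q) : ∀ x ∈ P, ∀ y ∈ Q, InfJ link x y := by
  obtain ⟨hP, hQ, hE⟩ := h
  obtain ⟨a, ha, b, hb, hab⟩ := poolEdge_pair hE
  have hab' : InfJ link a b := link_infJ hab
  intro x hx y hy
  have h1 : InfJ link x b := by
    rcases pool_mem_infJ hP hx ha with rfl | hxa
    · exact hab'
    · exact infJ_trans hxa hab'
  rcases pool_mem_infJ hQ hb hy with rfl | hby
  · exact h1
  · exact infJ_trans h1 hby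

lemma transGen_infJ {M : Type} [Fintype M] {link : ℕ → M → M → Prop} {P Q : Set M}
    (h : Relation.TransGen (PGEdge link) P Q) : ∀ x ∈ P, ∀ y ∈ Q, InfJ link x y := by
  induction h with
  | single hPQ => exact pgEdge_infJ hPQ
  | tail _ hQR ih =>
    intro x hx y hy
    obtain ⟨q, hq⟩ := pool_nonempty hQR.1
    exact infJ_trans (ih x hx q hq) (pgEdge_infJ hQR q hq y hy)

lemma poolRel_trans {M : Type} {link : ℕ → M → M → Prop} {a b c : M}
    (h1 : PoolRel link a b) (h2 : PoolRel link b c) : PoolRel link a c := by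
  rcases h1 with rfl | ⟨hab, hba⟩
  · exact h2
  · rcases h2 with rfl | ⟨hbc, hcb⟩
    · exact Or.inr ⟨hab, hba⟩
    · exact Or.inr ⟨infJ_trans hab hbc, infJ_trans hcb hba⟩

/-- The pool graph of any computation is a DAG: no directed cycle of length
≥ 2, i.e. two pools that are mutually reachable by pool-graph edges coincide. -/
theorem stmt_7 {M : Type} [Fintype M] (link : ℕ → M → M → Prop)
    (P1 P2 : Set M) (h1 : IsPool link P1) (h2 : IsPool link P2)
    (h12 : Relation.TransGen (PGEdge link) P1 P2)
    (h21 : Relation.TransGen (PGEdge link) P2 P1) :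
    P1 = P2 := by
  obtain ⟨a, rfl⟩ := h1
  obtain ⟨b, rfl⟩ := h2
  have ha : a ∈ {m' | PoolRel link a m'} := Or.inl rfl
  have hb : b ∈ {m' | PoolRel link b m'} := Or.inl rfl
  have hab : InfJ link a b := transGen_infJ h12 a ha b hb
  have hba : InfJ link b a := transGen_infJ h21 b hb a ha
  ext x
  constructor
  · exact fun hx => poolRel_trans (Or.inr ⟨hba, hab⟩) hx
  · exact fun hx => poolRel_trans (Or.inr ⟨hab, hba⟩) hx
end

section
/- If the blockchain of a computation contains an infinite branch, then this branch belongs to a single pool: there is a pool P and a suffix of the branch such that every block in the suffix is mined by a member of P. -/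
/-- A journey from `m` to `m'` whose links all occur in rounds in `[lo, hi)`. -/
def JourneyIn {M : Type} (link : ℕ → M → M → Prop) (lo hi : ℕ) (m m' : M) : Prop :=
  ∃ (k : ℕ) (f : ℕ → M) (t : ℕ → ℕ),
    0 < k ∧ f 0 = m ∧ f k = m' ∧
    (∀ i, i < k → link (t i) (f i) (f (i + 1))) ∧
    (∀ i, i < k → lo ≤ t i ∧ t i < hi) ∧
    (∀ i j, i < j → j < k → t i < t j)

/-- If the blockchain of a computation contains an infinite branch, then
this branch belongs to a single pool: there is a pool `P` and a suffix of the branch all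
of whose blocks are mined by members of `P`. Here `f` enumerates the blocks of the
infinite branch, `mnr b` is the miner of block `b`, `mt b` its mining round; ancestry
along the branch induces journeys between the corresponding miners. -/
theorem stmt_11 {M B : Type} [Fintype M] (link : ℕ → M → M → Prop)
    (f : ℕ → B) (mnr : B → M) (mt : B → ℕ)
    (hmono : StrictMono (fun n => mt (f n)))
    (hj : ∀ i j, i < j → JourneyIn link (mt (f i)) (mt (f j)) (mnr (f i)) (mnr (f j))) :
    ∃ P : Set M, IsPool link P ∧ ∃ n0 : ℕ, ∀ n, n0 ≤ n → mnr (f n) ∈ P := by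
  classical
  set g : ℕ → M := fun n => mnr (f n) with hg
  -- key: if two miners each occur unboundedly often, there are infinitely many journeys
  have key : ∀ a b : M, (g ⁻¹' {a}).Infinite → (g ⁻¹' {b}).Infinite →
      InfJ link a b := by
    intro a b ha hb r
    obtain ⟨i, hi, hir⟩ := ha.exists_gt r
    obtain ⟨j, hj', hij⟩ := hb.exists_gt i
    obtain ⟨k, F, t, hk, h0, hk', hlink, hrange, hinc⟩ := hj i j hij
    refine ⟨k, F, t, hk, h0.trans hi, hk'.trans hj', hlink, ?_, hinc⟩
    intro i' hi'
    have : mt (f i) ≤ t i' := (hrange i' hi').1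
    have hile : i ≤ mt (f i) := hmono.le_apply
    omega
  obtain ⟨a, ha⟩ := Finite.exists_infinite_fiber g
  rw [Set.infinite_coe_iff] at ha
  refine ⟨{m' | PoolRel link a m'}, ⟨a, rfl⟩, ?_⟩
  -- indices whose miner has only finite occurrences form a finite set
  have hT : {n : ℕ | ¬ (g ⁻¹' {g n}).Infinite}.Finite := by
    have hsub : {n : ℕ | ¬ (g ⁻¹' {g n}).Infinite} ⊆
        ⋃ b ∈ {b : M | ¬ (g ⁻¹' {b}).Infinite}, g ⁻¹' {b} := by
      intro n hn
      exact Set.mem_biUnion hn rfl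
    refine Set.Finite.subset (Set.Finite.biUnion (Set.toFinite _) ?_) hsub
    intro b hb
    exact Set.not_infinite.mp hb
  obtain ⟨n0, hn0⟩ := hT.bddAbove
  refine ⟨n0 + 1, fun n hn => ?_⟩
  have hgn : (g ⁻¹' {g n}).Infinite := by
    by_contra h
    have := hn0 h
    omega
  by_cases hab : a = g n
  · exact Or.inl hab
  · exact Or.inr ⟨key a (g n) ha hgn, key (g n) a hgn ha⟩
end

section
/- In a locally decisive computation, every infinite branch of the blockchain belongs to a source pool. -/
lemma journey_mono {M : Type} (link : ℕ → M → M → Prop) {r r' : ℕ} {m m' : M}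
    (h : r' ≤ r) (J : Journey link r m m') : Journey link r' m m' := by
  obtain ⟨k, g, t, hk, h0, hk', hl, ht, hs⟩ := J
  exact ⟨k, g, t, hk, h0, hk', hl, fun i hi => lt_of_le_of_lt h (ht i hi), hs⟩

lemma journey_comp {M : Type} (link : ℕ → M → M → Prop) {r : ℕ} {m a b : M}
    (h1 : Journey link r m a) (h2 : ∀ r', Journey link r' a b) :
    Journey link r m b := by
  obtain ⟨k1, f1, t1, hk1, hf10, hf1k, hl1, ht1, hs1⟩ := h1
  obtain ⟨k2, f2, t2, hk2, hf20, hf2k, hl2, ht2, hs2⟩ := h2 (t1 (k1 - 1))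
  refine ⟨k1 + k2, fun i => if i < k1 then f1 i else f2 (i - k1),
    fun i => if i < k1 then t1 i else t2 (i - k1), by omega, by simp [hk1, hf10], ?_, ?_, ?_, ?_⟩
  · have hnot : ¬ (k1 + k2 < k1) := by omega
    simp [hnot, Nat.add_sub_cancel_left, hf2k]
  · intro i hi
    by_cases h : i < k1
    · by_cases h' : i + 1 < k1
      · simpa [h, h'] using hl1 i h
      · have e : i + 1 - k1 = 0 := by omega
        simp only [if_pos h, if_neg h', e, hf20, ← hf1k]
        have hk : k1 = i + 1 := by omega
        rw [hk]
        exact hl1 i h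
    · have h' : ¬ (i + 1 < k1) := by omega
      have e : i + 1 - k1 = (i - k1) + 1 := by omega
      simpa [h, h', e] using hl2 (i - k1) (by omega)
  · intro i hi
    by_cases h : i < k1
    · simpa [h] using ht1 i h
    · have h1 := ht2 (i - k1) (by omega)
      have h2 := ht1 (k1 - 1) (by omega)
      simp only [if_neg h]
      omega
  · intro i j hij hj
    by_cases hi : i < k1 <;> by_cases hjk : j < k1
    · simpa [hi, hjk] using hs1 i j hij hjk
    · have h1 : t1 i ≤ t1 (k1 - 1) := by
        rcases Nat.lt_or_ge i (k1 - 1) with h | h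
        · exact le_of_lt (hs1 i (k1 - 1) h (by omega))
        · have e : i = k1 - 1 := by omega
          simp [e]
      have h2 := ht2 (j - k1) (by omega)
      simp only [if_pos hi, if_neg hjk]
      omega
    · omega
    · simpa [hi, hjk] using hs2 (i - k1) (j - k1) (by omega) (by omega)

lemma infj_trans {M : Type} (link : ℕ → M → M → Prop) {m a b : M}
    (h1 : InfJ link m a) (h2 : InfJ link a b) : InfJ link m b :=
  fun r => journey_comp link (h1 r) h2

lemma poolrel_symm {M : Type} (link : ℕ → M → M → Prop) {m m' : M}
    (h : PoolRel link m m') : PoolRel link m' m := by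
  rcases h with h | ⟨h1, h2⟩
  · exact Or.inl h.symm
  · exact Or.inr ⟨h2, h1⟩

lemma poolrel_trans {M : Type} (link : ℕ → M → M → Prop) {a b c : M}
    (h1 : PoolRel link a b) (h2 : PoolRel link b c) : PoolRel link a c := by
  rcases h1 with rfl | ⟨h1, h1'⟩
  · exact h2
  rcases h2 with rfl | ⟨h2, h2'⟩
  · exact Or.inr ⟨h1, h1'⟩
  · exact Or.inr ⟨infj_trans link h1 h2, infj_trans link h2' h1'⟩

/-- In a locally decisive computation, every infinite branch of the
blockchain belongs to a source pool. The branch `f` (with miners `mnr`, mining rounds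
`mt`, strictly increasing) belongs to pool `P`; local decisiveness is modeled by every
miner receiving every block of the branch, which requires a journey from the mining
miner starting after the mining round. Conclusion: `P` is a source pool. -/
theorem stmt_12 {M B : Type} [Fintype M] (link : ℕ → M → M → Prop)
    (f : ℕ → B) (mnr : B → M) (mt : B → ℕ)
    (hmono : StrictMono (fun n => mt (f n)))
    (P : Set M) (hP : IsPool link P)
    (hbelong : ∃ n0 : ℕ, ∀ n, n0 ≤ n → mnr (f n) ∈ P)
    (hrecv : ∀ n : ℕ, ∀ m : M, m ≠ mnr (f n) → Journey link (mt (f n)) (mnr (f n)) m) :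
    SourcePool link P := by
  obtain ⟨n0, hn0⟩ := hbelong
  -- pigeonhole: some miner m0 mines infinitely many blocks of the branch tail
  obtain ⟨m0, hm0⟩ := Finite.exists_infinite_fiber (fun n : ℕ => mnr (f (n + n0)))
  have hm0P : m0 ∈ P := by
    obtain ⟨n, hn⟩ := (Set.infinite_coe_iff.mp hm0).nonempty
    rw [Set.mem_preimage, Set.mem_singleton_iff] at hn
    exact hn ▸ hn0 (n + n0) (by omega)
  -- m0 has infinitely many journeys to every other miner
  have hinfj : ∀ m : M, m ≠ m0 → InfJ link m0 m := by
    intro m hm r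
    have hinf := Set.infinite_coe_iff.mp hm0
    obtain ⟨n, hn, hnr⟩ := hinf.exists_gt r
    rw [Set.mem_preimage, Set.mem_singleton_iff] at hn
    have hrle : r ≤ mt (f (n + n0)) := by
      have := hmono.le_apply (x := n + n0)
      have this : n + n0 ≤ mt (f (n + n0)) := this
      omega
    have := hrecv (n + n0) m (hn ▸ hm)
    rw [hn] at this
    exact journey_mono link hrle this
  refine ⟨hP, ?_⟩
  intro m hmP m' hm'P hIJ
  obtain ⟨base, hbase⟩ := hP
  have hmm0 : m ≠ m0 := fun h => hmP (h ▸ hm0P)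
  -- InfJ m0 m
  have h1 : InfJ link m0 m := hinfj m hmm0
  -- PoolRel m' m0 since both in P
  have hbm' : PoolRel link base m' := by rwa [hbase] at hm'P
  have hbm0 : PoolRel link base m0 := by rwa [hbase] at hm0P
  have hm'm0 : PoolRel link m' m0 := poolrel_trans link (poolrel_symm link hbm') hbm0
  -- InfJ m m0
  have h2 : InfJ link m m0 := by
    rcases hm'm0 with rfl | ⟨hj, _⟩
    · exact hIJ
    · exact infj_trans link hIJ hj
  have : PoolRel link m0 m := Or.inr ⟨h1, h2⟩
  have : m ∈ P := by
    rw [hbase]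
    exact poolrel_trans link hbm0 this
  exact hmP this
end

section
/- Once a branch of the blockchain is dead (all miners are mining on cousin branches longer than it), it remains dead in all subsequent rounds. -/
lemma stmt15_depth_le {B : Type} (parent : B → Option B) (depth : B → ℕ)
    (hdepth : ∀ c p : B, parent c = some p → depth c = depth p + 1)
    {a b : B} (h : Relation.ReflTransGen (fun c b => parent c = some b) a b) :
    depth b ≤ depth a := by
  induction h with
  | refl => exact le_refl _
  | tail _ hstep ih =>
      have := hdepth _ _ hstep
      omega

lemma stmt15_lin {B : Type} (parent : B → Option B)
    {x a b : B}
    (ha : Relation.ReflTransGen (fun c b => parent c = some b) x a)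
    (hb : Relation.ReflTransGen (fun c b => parent c = some b) x b) :
    Relation.ReflTransGen (fun c b => parent c = some b) a b ∨
      Relation.ReflTransGen (fun c b => parent c = some b) b a := by
  induction ha using Relation.ReflTransGen.head_induction_on with
  | refl => left; exact hb
  | head hstep _ ih =>
      rcases hb.cases_head with rfl | ⟨z, hz, hzb⟩
      · right; exact Relation.ReflTransGen.head hstep (by assumption)
      · have hz' : z = _ := Option.some_injective _ (hz.symm.trans hstep)
        subst hz'
        exact ih hzb

/-- Once a branch of the blockchain is dead (all miners are mining on
cousin branches longer than it), it remains dead in all subsequent rounds. The branch is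
represented by its leaf `lf` of depth `len`; `pos r m` is the block miner `m` mines on
at round `r`. A miner's position at round `r+1` is a descendant (or equal) of some
miner's position at round `r` (it extends its own branch or adopts another miner's
branch); children are one level deeper than their parents. Dead at round `r` means every
position is strictly deeper than `len` and not a descendant of `lf`, i.e. lies on a
longer cousin branch. -/
theorem stmt_15 {B M : Type} (parent : B → Option B) (depth : B → ℕ)
    (pos : ℕ → M → B) (lf : B) (len : ℕ) (hlen : depth lf = len)
    (hdepth : ∀ c p : B, parent c = some p → depth c = depth p + 1)
    (hswitch : ∀ (r : ℕ) (m : M), ∃ m' : M,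
      Relation.ReflTransGen (fun c b => parent c = some b) (pos (r + 1) m) (pos r m'))
    (Dead : ℕ → Prop)
    (hDead : ∀ r, Dead r ↔ ∀ m : M, len < depth (pos r m) ∧
      ¬ Relation.ReflTransGen (fun c b => parent c = some b) (pos r m) lf)
    (r : ℕ) (hdead : Dead r) :
    ∀ r', r ≤ r' → Dead r' := by
  intro r' hr'
  induction r', hr' using Nat.le_induction with
  | base => exact hdead
  | succ n _ ih =>
      rw [hDead] at ih ⊢
      intro m
      obtain ⟨m', hchain⟩ := hswitch n m
      obtain ⟨hlt, hnreach⟩ := ih m'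
      have hdle := stmt15_depth_le parent depth hdepth hchain
      refine ⟨lt_of_lt_of_le hlt hdle, fun hc => ?_⟩
      rcases stmt15_lin parent hchain hc with h | h
      · exact hnreach h
      · have := stmt15_depth_le parent depth hdepth h
        omega
end

section
/- If some miner observes (via reported positions) that the depth of the current position of every source pool miner is greater than the length of branch BR, and the source pool is initially closed, then no block of the unique infinite branch is ever mined on BR, i.e., BR is dead with respect to the source pool. -/
/-- If some miner observes (via reported positions) at round `r` that the
depth of the current position of every source pool miner exceeds the length `len` of
branch `BR`, and the source pool is initially closed — so the blocks `f n` of the unique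
infinite branch are mined by source pool miners `mb n` at round `mt n` as children of
their current positions — then, positions being non-decreasing in depth, no block of the
infinite branch mined from round `r` on lies on `BR`: `BR` is dead with respect to the
source pool. -/
theorem stmt_17 {B M : Type} (depth : B → ℕ) (pos : ℕ → M → B)
    (SM : Set M) (onBR : B → Prop) (len r : ℕ)
    (f : ℕ → B) (mb : ℕ → M) (mt : ℕ → ℕ)
    (hposMono : ∀ (m : M) (ρ : ℕ), depth (pos ρ m) ≤ depth (pos (ρ + 1) m))
    (hBRlen : ∀ c : B, onBR c → depth c ≤ len)
    (hsm : ∀ n, mb n ∈ SM)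
    (hmine : ∀ n, depth (f n) = depth (pos (mt n) (mb n)) + 1)
    (hobs : ∀ m ∈ SM, len < depth (pos r m)) :
    ∀ n, r ≤ mt n → len < depth (f n) ∧ ¬ onBR (f n) := by
  have mono : ∀ (m : M) (a b : ℕ), a ≤ b → depth (pos a m) ≤ depth (pos b m) := by
    intro m a b hab
    induction b with
    | zero => simp_all
    | succ b ih =>
      rcases Nat.lt_or_ge a (b+1) with h | h
      · exact (ih (Nat.lt_succ_iff.mp h)).trans (hposMono m b)
      · have : a = b + 1 := le_antisymm hab h
        simp [this]
  intro n hn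
  have h1 : len < depth (pos (mt n) (mb n)) :=
    lt_of_lt_of_le (hobs _ (hsm n)) (mono _ _ _ hn)
  have h2 : len < depth (f n) := by rw [hmine n]; omega
  exact ⟨h2, fun hc => absurd (hBRlen _ hc) (by omega)⟩
end
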